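/- Let x and v be strings with |v| ≤ 2|x|. Then the set of occurrences of x inside v forms a single arithmetic progression; moreover, if x has at least three occurrences in v, the common difference of this progression equals the minimum period of x. -/

import Mathlib

variable {α : Type*}

/-- The substring `T[i..i+ℓ)` (0-indexed). -/
def sub (T : List α) (i ℓ : ℕ) : List α := (T.drop i).take ℓ

/-- `p` is a period of `w`: `0 < p ≤ |w|` and `w[i] = w[i+p]` whenever both sides exist. -/
def IsPeriod (w : List α) (p : ℕ) : Prop :=
  0 < p ∧ p ≤ w.length ∧ ∀ i, i + p < w.length → w[i]? = w[i + p]?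

/-- The minimum period of `w`. -/
noncomputable def minPeriod (w : List α) : ℕ := sInf {p | IsPeriod w p}

lemma isPeriod_length (w : List α) (h : 0 < w.length) : IsPeriod w w.length :=
  ⟨h, le_rfl, fun _ hi => absurd hi (by omega)⟩

lemma minPeriod_isPeriod (w : List α) (h : 0 < w.length) : IsPeriod w (minPeriod w) := by
  have h1 : {p | IsPeriod w p}.Nonempty := ⟨w.length, Set.mem_ofPred.mpr (isPeriod_length w h)⟩
  have h2 := Nat.sInf_mem h1
  exact Set.mem_ofPred.mp h2

lemma minPeriod_le (w : List α) {q : ℕ} (hq : IsPeriod w q) : minPeriod w ≤ q := by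
  exact Nat.sInf_le (Set.mem_ofPred.mpr hq)

lemma period_mul (w : List α) {p : ℕ} (hp : IsPeriod w p) :
    ∀ (t i : ℕ), i + t * p < w.length → w[i]? = w[i + t * p]? := by
  intro t
  induction t with
  | zero => simp
  | succ t ih =>
    intro i h
    have e : (t + 1) * p = t * p + p := by ring
    have h1 : i + t * p < w.length := by omega
    calc w[i]? = w[i + t * p]? := ih i h1
      _ = w[i + t * p + p]? := hp.2.2 _ (by omega)
      _ = w[i + (t + 1) * p]? := by congr 1; omega

lemma minPeriod_dvd (x : List α) (hx : 0 < x.length) :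
    ∀ q, IsPeriod x q → minPeriod x + q ≤ x.length → minPeriod x ∣ q := by
  intro q
  induction q using Nat.strong_induction_on with
  | _ q ih =>
    intro hq h
    have hp := minPeriod_isPeriod x hx
    set p := minPeriod x with hp'
    have hp0 : 0 < p := hp.1
    have hpq : p ≤ q := minPeriod_le x hq
    rcases eq_or_lt_of_le hpq with he | hlt
    · exact he ▸ dvd_refl p
    · have hqp : IsPeriod x (q - p) := by
        refine ⟨by omega, by omega, ?_⟩
        intro i hi
        by_cases hc : i + q < x.length
        · calc x[i]? = x[i + q]? := hq.2.2 i hc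
            _ = x[i + (q - p)]? := by
                have e := hp.2.2 (i + (q - p)) (by omega)
                rw [e]; congr 1; omega
        · have hip : p ≤ i := by omega
          have e1 : x[i - p]? = x[i]? := by
            have e := hp.2.2 (i - p) (by omega)
            rw [e]; congr 1; omega
          have e2 : x[i - p]? = x[i + (q - p)]? := by
            have e := hq.2.2 (i - p) (by omega)
            rw [e]; congr 1; omega
          rw [← e1, e2]
      obtain ⟨c, hc⟩ := ih (q - p) (by omega) hqp (by omega)
      refine ⟨c + 1, ?_⟩
      have e : p * (c + 1) = p * c + p := by ring
      omega

lemma occ_getElem? {x v : List α} {i : ℕ} (hi : i + x.length ≤ v.length)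
    (hs : sub v i x.length = x) : ∀ t, t < x.length → v[i + t]? = x[t]? := by
  intro t ht
  have h1 : (sub v i x.length)[t]? = x[t]? := by rw [hs]
  rw [sub, List.getElem?_take, if_pos ht, List.getElem?_drop] at h1
  exact h1

lemma occ_of {x v : List α} {i : ℕ} (hi : i + x.length ≤ v.length)
    (h : ∀ t, t < x.length → v[i + t]? = x[t]?) : sub v i x.length = x := by
  apply List.ext_getElem?
  intro t
  by_cases ht : t < x.length
  · rw [sub, List.getElem?_take, if_pos ht, List.getElem?_drop, h t ht]
  · rw [sub, List.getElem?_take, if_neg ht, eq_comm, List.getElem?_eq_none_iff]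
    omega

/-- The difference of two occurrences is a period (when `|v| ≤ 2|x|`). -/
lemma gap_period {x v : List α} {i j : ℕ} (hx : 0 < x.length)
    (hv : v.length ≤ 2 * x.length)
    (hi : i + x.length ≤ v.length) (hsi : sub v i x.length = x)
    (hj : j + x.length ≤ v.length) (hsj : sub v j x.length = x)
    (hij : i < j) : IsPeriod x (j - i) := by
  refine ⟨by omega, by omega, ?_⟩
  intro t ht
  have e1 := occ_getElem? hi hsi (t + (j - i)) ht
  have e2 := occ_getElem? hj hsj t (by omega)
  rw [show i + (t + (j - i)) = j + t by omega] at e1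
  rw [e2] at e1
  exact e1

/-- Shifting an occurrence by the minimum period gives a new occurrence, provided
there is another occurrence at distance `d` with `p + d ≤ |x|`. -/
lemma step_occ {x v : List α} {i j : ℕ} (hx : 0 < x.length) (hv : v.length ≤ 2 * x.length)
    (hi : i + x.length ≤ v.length) (hsi : sub v i x.length = x)
    (hj : j + x.length ≤ v.length) (hsj : sub v j x.length = x)
    (hij : i < j) (hle : minPeriod x + (j - i) ≤ x.length) :
    (i + minPeriod x) + x.length ≤ v.length ∧ sub v (i + minPeriod x) x.length = x := by
  have hp := minPeriod_isPeriod x hx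
  set p := minPeriod x with hp'
  have hd := gap_period hx hv hi hsi hj hsj hij
  have hdvd := minPeriod_dvd x hx (j - i) hd hle
  have hp0 : 0 < p := hp.1
  have hple : p ≤ j - i := Nat.le_of_dvd (by omega) hdvd
  refine ⟨by omega, ?_⟩
  apply occ_of (by omega)
  intro t ht
  by_cases hc : p + t < x.length
  · have e1 := occ_getElem? hi hsi (p + t) hc
    have e2 := hp.2.2 t (by omega)
    rw [show i + p + t = i + (p + t) by omega, e1, show p + t = t + p by omega]
    exact e2.symm
  · obtain ⟨c, hc'⟩ := hdvd
    rw [← hp'] at hc'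
    have hc0 : c ≠ 0 := by rintro rfl; omega
    have hd1 : j - i ≤ x.length - p := by omega
    have htd : j - i ≤ t := by omega
    have e1 := occ_getElem? hj hsj (p + t - (j - i)) (by omega)
    have e4 : (c - 1) * p + p = p * c := by
      have h5 : (c - 1) * p = c * p - p := Nat.sub_one_mul c p
      have h6 : c * p = p * c := mul_comm c p
      have h7 : p ≤ c * p := Nat.le_mul_of_pos_left p (by omega)
      omega
    have e3 := period_mul x hp (c - 1) (p + t - (j - i)) (by omega)
    rw [show p + t - (j - i) + (c - 1) * p = t by omega] at e3
    rw [show i + p + t = j + (p + t - (j - i)) by omega, e1, ← e3]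

theorem stmt1 (x v : List α) (hx : 0 < x.length) (hv : v.length ≤ 2 * x.length) :
    ∃ a d k : ℕ,
      {i | i + x.length ≤ v.length ∧ sub v i x.length = x} =
        (fun t => a + t * d) '' Set.Iio k ∧
      (∀ t₁ < k, ∀ t₂ < k, a + t₁ * d = a + t₂ * d → t₁ = t₂) ∧
      (3 ≤ k → d = minPeriod x) := by
  classical
  set S : Set ℕ := {i | i + x.length ≤ v.length ∧ sub v i x.length = x} with hS
  have memS : ∀ i, i ∈ S ↔ (i + x.length ≤ v.length ∧ sub v i x.length = x) :=
    fun i => Iff.rfl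
  by_cases hne : S.Nonempty
  swap
  · refine ⟨0, 0, 0, ?_, by intro t₁ h; omega, fun h => absurd h (by omega)⟩
    rw [show S = (∅ : Set ℕ) from Set.not_nonempty_iff_eq_empty.mp hne]
    ext i; simp
  · have hp := minPeriod_isPeriod x hx
    set p := minPeriod x with hp'
    have hp0 : 0 < p := hp.1
    set a := sInf S with ha'
    have haS : a ∈ S := Nat.sInf_mem hne
    have hub : ∀ i ∈ S, i ≤ v.length := fun i hi => by
      have := ((memS i).mp hi).1; omega
    set b := Nat.findGreatest (· ∈ S) v.length with hb'
    have hbS : b ∈ S := Nat.findGreatest_spec (hub a haS) haS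
    have hble : ∀ i ∈ S, i ≤ b := fun i hi => Nat.le_findGreatest (hub i hi) hi
    have hab : a ≤ b := hble a haS
    have hban : b ≤ x.length := by have := ((memS b).mp hbS).1; omega
    have hgap : ∀ i ∈ S, ∀ j ∈ S, i < j → IsPeriod x (j - i) := by
      intro i hi j hj hij
      obtain ⟨h1, h2⟩ := (memS i).mp hi
      obtain ⟨h3, h4⟩ := (memS j).mp hj
      exact gap_period hx hv h1 h2 h3 h4 hij
    rcases eq_or_lt_of_le hab with heq | hlt
    · -- exactly one occurrence
      refine ⟨a, 0, 1, ?_, by intro t₁ h1 t₂ h2 _; omega, fun h => absurd h (by omega)⟩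
      ext i
      simp only [Set.mem_image, Set.mem_Iio]
      constructor
      · intro hi
        have h1 : a ≤ i := Nat.sInf_le hi
        have h2 : i ≤ b := hble i hi
        exact ⟨0, by omega, by omega⟩
      · rintro ⟨t, ht, rfl⟩
        have : t = 0 := by omega
        subst this
        simpa using haS
    · by_cases hmid : ∃ c ∈ S, a < c ∧ c < b
      · -- at least three occurrences: difference is the minimum period
        have claim1 : ∀ i ∈ S, i < b → i + p ∈ S := by
          intro i hiS hib
          have hne2 : {s | s ∈ S ∧ i < s}.Nonempty := ⟨b, hbS, hib⟩
          set j := sInf {s | s ∈ S ∧ i < s} with hj'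
          have hjS : j ∈ S ∧ i < j := Nat.sInf_mem hne2
          have hjb : j ≤ b := hble j hjS.1
          have hlej : p + (j - i) ≤ x.length := by
            by_cases hia : a < i
            · have h1 := minPeriod_le x (hgap a haS i hiS hia)
              omega
            · have hia' : i = a := by have := Nat.sInf_le hiS; omega
              obtain ⟨c, hcS, hac, hcb⟩ := hmid
              have hjc : j ≤ c := Nat.sInf_le ⟨hcS, by omega⟩
              have hjb' : j < b := by omega
              have h1 := minPeriod_le x (hgap j hjS.1 b hbS hjb')
              omega
          obtain ⟨h1, h2⟩ := (memS i).mp hiS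
          obtain ⟨h3, h4⟩ := (memS j).mp hjS.1
          exact (memS _).mpr (step_occ hx hv h1 h2 h3 h4 hjS.2 hlej)
        have hspace : ∀ i ∈ S, i < b → i + p ≤ b :=
          fun i hi hib => hble _ (claim1 i hi hib)
        have hdvdall : ∀ r, ∀ i ∈ S, i + r = b → p ∣ r := by
          intro r
          induction r using Nat.strong_induction_on with
          | _ r ih =>
            intro i hiS hir
            rcases Nat.eq_zero_or_pos r with rfl | hr
            · exact dvd_zero p
            · have hib : i < b := by omega
              have hipS := claim1 i hiS hib
              have hipb : i + p ≤ b := hble _ hipS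
              obtain ⟨c, hc⟩ := ih (r - p) (by omega) (i + p) hipS (by omega)
              refine ⟨c + 1, ?_⟩
              have e : p * (c + 1) = p * c + p := by ring
              omega
        obtain ⟨T, hT⟩ := hdvdall (b - a) a haS (by omega)
        have hTp : p * T = T * p := mul_comm _ _
        have hmem : ∀ t, t ≤ T → a + t * p ∈ S := by
          intro t
          induction t with
          | zero => intro _; simpa using haS
          | succ t ihh =>
            intro htT
            have h1 : a + t * p ∈ S := ihh (by omega)
            have h2 : a + t * p < b := by
              have e : t * p + p = (t + 1) * p := by ring
              have e2 : (t + 1) * p ≤ T * p := Nat.mul_le_mul_right _ htT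
              omega
            have h3 := claim1 _ h1 h2
            have e : a + t * p + p = a + (t + 1) * p := by ring
            rwa [e] at h3
        refine ⟨a, p, T + 1, ?_, ?_, fun _ => rfl⟩
        · ext i
          simp only [Set.mem_image, Set.mem_Iio]
          constructor
          · intro hiS
            have h1 : a ≤ i := Nat.sInf_le hiS
            have h2 : i ≤ b := hble i hiS
            obtain ⟨s, hs⟩ := hdvdall (b - i) i hiS (by omega)
            have hsT : s ≤ T := by
              have hmul : p * s ≤ p * T := by omega
              exact Nat.le_of_mul_le_mul_left hmul hp0
            refine ⟨T - s, by omega, ?_⟩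
            have e : (T - s) * p + s * p = T * p := by
              rw [← Nat.add_mul]; congr 1; omega
            have hsp : p * s = s * p := mul_comm _ _
            omega
          · rintro ⟨t, ht, rfl⟩
            exact hmem t (by omega)
        · intro t₁ h1 t₂ h2 he
          exact Nat.eq_of_mul_eq_mul_right hp0 (by omega : t₁ * p = t₂ * p)
      · -- exactly two occurrences
        refine ⟨a, b - a, 2, ?_, ?_, fun h => absurd h (by omega)⟩
        · ext i
          simp only [Set.mem_image, Set.mem_Iio]
          constructor
          · intro hiS
            have h1 : a ≤ i := Nat.sInf_le hiS
            have h2 : i ≤ b := hble i hiS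
            rcases eq_or_lt_of_le h1 with he | h1'
            · exact ⟨0, by omega, by omega⟩
            rcases eq_or_lt_of_le h2 with he | h2'
            · exact ⟨1, by omega, by omega⟩
            exact absurd ⟨i, hiS, h1', h2'⟩ hmid
          · rintro ⟨t, ht, rfl⟩
            interval_cases t
            · simpa using haS
            · have e : a + 1 * (b - a) = b := by omega
              rw [e]; exact hbS
        · intro t₁ h1 t₂ h2 he
          interval_cases t₁ <;> interval_cases t₂ <;> omega
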